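/- (Classical rigid ideal gas cools down faster.) Let k > 0, κ > 0, c > 1, μ < 0, and define U(T) := c κ k T^{c+1} exp(μ/(k T)) and N(T) := κ T^c exp(μ/(k T)) on (0, ∞). Define F(T) := (U'(T) − μ N'(T)) / T (the T-derivative of the entropy at constant μ). Then F is differentiable on (0, ∞) and F'(T) > 0 for every T > 0; equivalently, the Amari–Chentsov component C^{111} = −F'(T) of the classical ideal gas in a rigid container is strictly negative, and it is proportional to −k^{−2} T^{c−5} exp(μ/(kT)) · ( c(c²−1) k³ T³ − 3 μ (c−1) c k² T² + 3 μ² (c−1) k T − μ³ ). -/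

import Mathlib

lemma exp_part (k μ : ℝ) (hk : 0 < k) {T : ℝ} (hT : 0 < T) :
    HasDerivAt (fun t => Real.exp (μ / (k * t)))
      (Real.exp (μ / (k * T)) * (-μ / (k * T ^ 2))) T := by
  have h1 : HasDerivAt (fun t : ℝ => k * t) k T := by
    simpa using (hasDerivAt_id T).const_mul k
  have h3 := ((h1.inv (by positivity)).const_mul μ).exp
  simp only [Pi.inv_apply] at h3
  simp only [div_eq_mul_inv]
  convert h3 using 1
  field_simp

lemma mono_part (k μ p : ℝ) (hk : 0 < k) {T : ℝ} (hT : 0 < T) :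
    HasDerivAt (fun t : ℝ => t ^ p * Real.exp (μ / (k * t)))
      (p * T ^ (p - 1) * Real.exp (μ / (k * T))
        + T ^ p * (Real.exp (μ / (k * T)) * (-μ / (k * T ^ 2)))) T :=
  (Real.hasDerivAt_rpow_const (Or.inl hT.ne')).mul (exp_part k μ hk hT)

lemma rpow_shift {T : ℝ} (hT : 0 < T) (a b : ℝ) (n : ℕ) (h : a = b + n) :
    T ^ a = T ^ b * T ^ n := by
  rw [h, Real.rpow_add hT, Real.rpow_natCast]

/-- **Classical rigid ideal gas cools down faster.** For a classical ideal gas in a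
rigid container at constant chemical potential `μ < 0`, with `U(T) = cκk T^{c+1} ξ`,
`N(T) = κ T^c ξ` and `F(T) = (U'(T) − μ N'(T))/T` (the `T`-derivative of the entropy),
`F` is differentiable with `F' > 0` on `(0,∞)`; equivalently the Amari–Chentsov
component `C¹¹¹ = −F'` is strictly negative, with
`F'(T) = (κ/k²) T^{c−5} e^{μ/(kT)} (c(c²−1)k³T³ − 3μ(c−1)ck²T² + 3μ²(c−1)kT − μ³)`. -/
theorem classical_rigid_gas_amari_chentsov_neg
    (k κ c μ : ℝ) (hk : 0 < k) (hκ : 0 < κ) (hc : 1 < c) (hμ : μ < 0)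
    (U N F : ℝ → ℝ)
    (hU : ∀ T, U T = c * κ * k * T ^ (c + 1) * Real.exp (μ / (k * T)))
    (hN : ∀ T, N T = κ * T ^ c * Real.exp (μ / (k * T)))
    (hF : ∀ T, F T = (deriv U T - μ * deriv N T) / T) :
    (∀ T : ℝ, 0 < T → DifferentiableAt ℝ F T) ∧
    (∀ T : ℝ, 0 < T →
      deriv F T = κ / k ^ 2 * T ^ (c - 5) * Real.exp (μ / (k * T)) *
        (c * (c ^ 2 - 1) * k ^ 3 * T ^ 3 - 3 * μ * (c - 1) * c * k ^ 2 * T ^ 2 +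
          3 * μ ^ 2 * (c - 1) * k * T - μ ^ 3)) ∧
    (∀ T : ℝ, 0 < T → 0 < deriv F T) ∧
    (∀ T : ℝ, 0 < T → -deriv F T < 0) := by
  set G : ℝ → ℝ := fun t => κ * (Real.exp (μ / (k * t)) *
      (c * (c + 1) * k * t ^ (c - 1) - 2 * c * μ * t ^ (c - 2) + μ ^ 2 / k * t ^ (c - 3)))
    with hG
  have hUfun : U = fun t => c * κ * k * (t ^ (c + 1) * Real.exp (μ / (k * t))) := by
    funext t; rw [hU t]; ring
  have hNfun : N = fun t => κ * (t ^ c * Real.exp (μ / (k * t))) := by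
    funext t; rw [hN t]; ring
  have hdU : ∀ T : ℝ, 0 < T → deriv U T = c * κ * k *
      ((c + 1) * T ^ (c + 1 - 1) * Real.exp (μ / (k * T))
        + T ^ (c + 1) * (Real.exp (μ / (k * T)) * (-μ / (k * T ^ 2)))) := by
    intro T hT
    rw [hUfun]
    exact ((mono_part k μ (c + 1) hk hT).const_mul (c * κ * k)).deriv
  have hdN : ∀ T : ℝ, 0 < T → deriv N T = κ *
      (c * T ^ (c - 1) * Real.exp (μ / (k * T))
        + T ^ c * (Real.exp (μ / (k * T)) * (-μ / (k * T ^ 2)))) := by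
    intro T hT
    rw [hNfun]
    exact ((mono_part k μ c hk hT).const_mul κ).deriv
  have hFG : ∀ T : ℝ, 0 < T → F T = G T := by
    intro T hT
    have e1 := rpow_shift hT (c + 1 - 1) (c - 3) 3 (by push_cast; ring)
    have e2 := rpow_shift hT (c + 1) (c - 3) 4 (by push_cast; ring)
    have e3 := rpow_shift hT c (c - 3) 3 (by push_cast; ring)
    have e4 := rpow_shift hT (c - 1) (c - 3) 2 (by push_cast; ring)
    have e5 := rpow_shift hT (c - 2) (c - 3) 1 (by push_cast; ring)
    rw [hF T, hdU T hT, hdN T hT, hG]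
    simp only [e1, e2, e3, e4, e5, pow_one]
    field_simp
    ring
  have hGd : ∀ T : ℝ, 0 < T → HasDerivAt G
      (κ * (Real.exp (μ / (k * T)) * (-μ / (k * T ^ 2)) *
          (c * (c + 1) * k * T ^ (c - 1) - 2 * c * μ * T ^ (c - 2) + μ ^ 2 / k * T ^ (c - 3))
        + Real.exp (μ / (k * T)) *
          (c * (c + 1) * k * ((c - 1) * T ^ (c - 1 - 1))
            - 2 * c * μ * ((c - 2) * T ^ (c - 2 - 1))
            + μ ^ 2 / k * ((c - 3) * T ^ (c - 3 - 1))))) T := by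
    intro T hT
    have p1 : HasDerivAt (fun t : ℝ => c * (c + 1) * k * t ^ (c - 1) - 2 * c * μ * t ^ (c - 2)
        + μ ^ 2 / k * t ^ (c - 3))
        (c * (c + 1) * k * ((c - 1) * T ^ (c - 1 - 1))
          - 2 * c * μ * ((c - 2) * T ^ (c - 2 - 1))
          + μ ^ 2 / k * ((c - 3) * T ^ (c - 3 - 1))) T :=
      (((Real.hasDerivAt_rpow_const (Or.inl hT.ne')).const_mul (c * (c + 1) * k)).sub
        ((Real.hasDerivAt_rpow_const (Or.inl hT.ne')).const_mul (2 * c * μ))).add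
        ((Real.hasDerivAt_rpow_const (Or.inl hT.ne')).const_mul (μ ^ 2 / k))
    exact ((exp_part k μ hk hT).mul p1).const_mul κ
  have key : ∀ T : ℝ, 0 < T → DifferentiableAt ℝ F T ∧
      deriv F T = κ / k ^ 2 * T ^ (c - 5) * Real.exp (μ / (k * T)) *
        (c * (c ^ 2 - 1) * k ^ 3 * T ^ 3 - 3 * μ * (c - 1) * c * k ^ 2 * T ^ 2 +
          3 * μ ^ 2 * (c - 1) * k * T - μ ^ 3) := by
    intro T hT
    have heq : F =ᶠ[nhds T] G := by
      filter_upwards [isOpen_Ioi.mem_nhds hT] with t ht using hFG t ht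
    have hGd' := hGd T hT
    refine ⟨(heq.differentiableAt_iff).mpr hGd'.differentiableAt, ?_⟩
    rw [heq.deriv_eq, hGd'.deriv]
    have e1 := rpow_shift hT (c - 1) (c - 5) 4 (by push_cast; ring)
    have e2 := rpow_shift hT (c - 2) (c - 5) 3 (by push_cast; ring)
    have e3 := rpow_shift hT (c - 3) (c - 5) 2 (by push_cast; ring)
    have e4 := rpow_shift hT (c - 1 - 1) (c - 5) 3 (by push_cast; ring)
    have e5 := rpow_shift hT (c - 2 - 1) (c - 5) 2 (by push_cast; ring)
    have e6 := rpow_shift hT (c - 3 - 1) (c - 5) 1 (by push_cast; ring)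
    simp only [e1, e2, e3, e4, e5, e6, pow_one]
    field_simp
    ring
  have hpos : ∀ T : ℝ, 0 < T → 0 < deriv F T := by
    intro T hT
    rw [(key T hT).2]
    have h1 : 0 < κ / k ^ 2 * T ^ (c - 5) * Real.exp (μ / (k * T)) := by
      have := Real.rpow_pos_of_pos hT (c - 5)
      positivity
    have hc0 : (0:ℝ) < c := by linarith
    have hc1 : (0:ℝ) < c - 1 := by linarith
    have hcsq : (0:ℝ) < c ^ 2 - 1 := by nlinarith
    have h2 : 0 < c * (c ^ 2 - 1) * k ^ 3 * T ^ 3 - 3 * μ * (c - 1) * c * k ^ 2 * T ^ 2 +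
        3 * μ ^ 2 * (c - 1) * k * T - μ ^ 3 := by
      have ha : 0 < c * (c ^ 2 - 1) * k ^ 3 * T ^ 3 :=
        mul_pos (mul_pos (mul_pos hc0 hcsq) (pow_pos hk 3)) (pow_pos hT 3)
      have hb : 0 < -(3 * μ * (c - 1) * c * k ^ 2 * T ^ 2) := by
        nlinarith [mul_pos (mul_pos (mul_pos (mul_pos
          (by linarith : (0:ℝ) < 3 * (-μ)) hc1) hc0) (pow_pos hk 2)) (pow_pos hT 2)]
      have hcc : 0 < 3 * μ ^ 2 * (c - 1) * k * T := by
        nlinarith [mul_pos (mul_pos (mul_pos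
          (by nlinarith : (0:ℝ) < 3 * μ ^ 2) hc1) hk) hT]
      have hd : 0 < -μ ^ 3 := by nlinarith [pow_pos (neg_pos.mpr hμ) 3]
      linarith
    exact mul_pos h1 h2
  exact ⟨fun T hT => (key T hT).1, fun T hT => (key T hT).2, hpos,
    fun T hT => neg_neg_iff_pos.mpr (hpos T hT)⟩
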